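/- Let X be a locally complete ordered set with a bottom element. A morphism f in the category Ord ×_Set Fam(X) (the pullback of the forgetful functors Ord → Set and Fam(X) → Set) is an effective descent morphism if and only if its image ρ₁(f) under the projection to Ord is an effective descent morphism in Ord and its image ρ₂(f) under the projection to Fam(X) is an effective descent morphism in Fam(X). -/

import Mathlib

open CategoryTheory Limits

universe u
universe u₁ v₁ u₂ v₂

attribute [local instance] CategoryTheory.ConcreteCategory.instFunLike

namespace Desc

/-! ### Order-theoretic notions for preorders ("ordered sets") -/

/-- `x ≅ y`: equivalence in a preorder. -/
def EquivLE {X : Type u} [Preorder X] (x y : X) : Prop := x ≤ y ∧ y ≤ x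

/-- `m` is a binary meet (greatest lower bound) of `y` and `z`. -/
def IsMeet {X : Type u} [Preorder X] (y z m : X) : Prop :=
  m ≤ y ∧ m ≤ z ∧ ∀ u, u ≤ y → u ≤ z → u ≤ m

/-- `j` is a join (least upper bound) of the subset `S` computed in the down-set `↓x`. -/
def IsLocalJoin {X : Type u} [Preorder X] (x : X) (S : Set X) (j : X) : Prop :=
  j ≤ x ∧ (∀ s ∈ S, s ≤ j) ∧ ∀ u, u ≤ x → (∀ s ∈ S, s ≤ u) → j ≤ u

/-- `X` is locally complete: every subset of a down-set `↓x` has a join in `↓x`. -/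
def LocallyComplete (X : Type u) [Preorder X] : Prop :=
  ∀ x : X, ∀ S : Set X, (∀ s ∈ S, s ≤ x) → ∃ j, IsLocalJoin x S j

/-- `X` is complete: every subset has a join (least upper bound). -/
def CompleteOrd (X : Type u) [Preorder X] : Prop :=
  ∀ S : Set X, ∃ j, IsLUB S j

/-- `X` locally has binary meets: each down-set `↓x` has binary meets
(these are automatically meets in `X` of the pair). -/
def LocallyBinaryMeets (X : Type u) [Preorder X] : Prop :=
  ∀ x y z : X, y ≤ x → z ≤ x → ∃ m, IsMeet y z m

/-- `X` is locally cartesian closed: each down-set `↓x` has binary meets and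
exponentials `z^y` satisfying `w ∧ y ≤ z ↔ w ≤ z^y`. -/
def LocallyCartesianClosed (X : Type u) [Preorder X] : Prop :=
  LocallyBinaryMeets X ∧
    ∀ x y z : X, y ≤ x → z ≤ x →
      ∃ e, e ≤ x ∧ ∀ w, w ≤ x → ((∃ m, IsMeet w y m ∧ m ≤ z) ↔ w ≤ e)

theorem LocallyComplete.meets {X : Type u} [Preorder X] (h : LocallyComplete X) :
    LocallyBinaryMeets X := by
  intro x y z hy hz
  obtain ⟨j, hj⟩ := h x {u | u ≤ y ∧ u ≤ z} (fun s hs => hs.1.trans hy)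
  exact ⟨j, hj.2.2 y hy (fun s hs => hs.1), hj.2.2 z hz (fun s hs => hs.2),
    fun u h1 h2 => hj.2.1 u ⟨h1, h2⟩⟩

theorem CompleteOrd.meets {X : Type u} [Preorder X] (h : CompleteOrd X) :
    LocallyBinaryMeets X := by
  intro _ y z _ _
  obtain ⟨j, hj⟩ := h {u | u ≤ y ∧ u ≤ z}
  exact ⟨j, hj.2 (fun u hu => hu.1), hj.2 (fun u hu => hu.2),
    fun u h1 h2 => hj.1 ⟨h1, h2⟩⟩

/-! ### Descent-theoretic notions -/

/-- A morphism `f : A ⟶ B` in a category with pullbacks is an *effective descent morphism*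
if the comparison functor from `𝒜/B` to the Eilenberg–Moore category of the monad induced on
`𝒜/A` by the adjunction `f_! ⊣ f*` is an equivalence, i.e. `f*` is monadic. -/
def IsEffectiveDescentMorphism {C : Type*} [Category C] [HasPullbacks C]
    {A B : C} (f : A ⟶ B) : Prop :=
  (Monad.comparison (Over.mapPullbackAdj f)).IsEquivalence

/-- A morphism `f : A ⟶ B` in a category with pullbacks is a *descent morphism*
if the comparison functor from `𝒜/B` to the Eilenberg–Moore category of the monad induced on
`𝒜/A` by the adjunction `f_! ⊣ f*` is fully faithful. -/
def IsDescentMorphism {C : Type*} [Category C] [HasPullbacks C]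
    {A B : C} (f : A ⟶ B) : Prop :=
  (Monad.comparison (Over.mapPullbackAdj f)).Full ∧
    (Monad.comparison (Over.mapPullbackAdj f)).Faithful

/-- A morphism `f : A ⟶ B` is a (pullback-)stable regular epimorphism if every pullback of it
(along any `g : Z ⟶ B`) is a regular epimorphism. -/
def IsStableRegularEpi {C : Type*} [Category C] [HasPullbacks C]
    {A B : C} (f : A ⟶ B) : Prop :=
  ∀ ⦃Z : C⦄ (g : Z ⟶ B), Nonempty (RegularEpi (pullback.snd f g))



section PreordPullbacks

instance : HasPullbacks Preord.{u} := by
  have key : ∀ {A B C : Preord.{u}} (f : A ⟶ C) (g : B ⟶ C), HasLimit (cospan f g) := by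
    intro A B C f g
    let P : Preord.{u} := Preord.of {p : A × B // f p.1 = g p.2}
    let fst : P ⟶ A := ConcreteCategory.ofHom ⟨fun p => p.1.1, fun _ _ h => h.1⟩
    let snd : P ⟶ B := ConcreteCategory.ofHom ⟨fun p => p.1.2, fun _ _ h => h.2⟩
    have eq : fst ≫ f = snd ≫ g := ConcreteCategory.hom_ext _ _ (fun p => p.2)
    refine HasLimit.mk ⟨_, PullbackCone.IsLimit.mk eq
      (fun s => ConcreteCategory.ofHom ⟨fun d => ⟨(s.fst d, s.snd d),
        congrFun (congrArg (fun (h : s.pt ⟶ C) => (h : s.pt → C)) s.condition) d⟩,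
        fun _ _ h => ⟨s.fst.hom.monotone h, s.snd.hom.monotone h⟩⟩)
      (fun s => rfl) (fun s => rfl) (fun s m h1 h2 => ?_)⟩
    apply ConcreteCategory.hom_ext
    intro d
    apply Subtype.ext
    exact Prod.ext (congrFun (congrArg (fun (h : s.pt ⟶ A) => (h : s.pt → A)) h1) d)
      (congrFun (congrArg (fun (h : s.pt ⟶ B) => (h : s.pt → B)) h2) d)
  exact @hasPullbacks_of_hasLimit_cospan _ _ (fun {A B C f g} => key f g)

instance : HasPullbacks PartOrd.{u} := by
  have key : ∀ {A B C : PartOrd.{u}} (f : A ⟶ C) (g : B ⟶ C), HasLimit (cospan f g) := by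
    intro A B C f g
    let P : PartOrd.{u} := PartOrd.of {p : A × B // f p.1 = g p.2}
    let fst : P ⟶ A := ConcreteCategory.ofHom ⟨fun p => p.1.1, fun _ _ h => h.1⟩
    let snd : P ⟶ B := ConcreteCategory.ofHom ⟨fun p => p.1.2, fun _ _ h => h.2⟩
    have eq : fst ≫ f = snd ≫ g := ConcreteCategory.hom_ext _ _ (fun p => p.2)
    refine HasLimit.mk ⟨_, PullbackCone.IsLimit.mk eq
      (fun s => ConcreteCategory.ofHom ⟨fun d => ⟨(s.fst d, s.snd d),
        congrFun (congrArg (fun (h : s.pt ⟶ C) => (h : s.pt → C)) s.condition) d⟩,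
        fun _ _ h => ⟨s.fst.hom.monotone h, s.snd.hom.monotone h⟩⟩)
      (fun s => rfl) (fun s => rfl) (fun s m h1 h2 => ?_)⟩
    apply ConcreteCategory.hom_ext
    intro d
    apply Subtype.ext
    exact Prod.ext (congrFun (congrArg (fun (h : s.pt ⟶ A) => (h : s.pt → A)) h1) d)
      (congrFun (congrArg (fun (h : s.pt ⟶ B) => (h : s.pt → B)) h2) d)
  exact @hasPullbacks_of_hasLimit_cospan _ _ (fun {A B C f g} => key f g)

end PreordPullbacks



variable (X : Type u) [Preorder X]

/-! ### The lax comma category `Ord // X` -/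

/-- Objects of the lax comma category `Ord // X`: an ordered set `A` together with a
monotone map `α : A → X`. -/
structure OrdComma : Type (u + 1) where
  carrier : Type u
  [str : Preorder carrier]
  map : carrier → X
  mono : Monotone map

attribute [instance] OrdComma.str

variable {X}

/-- Morphisms in `Ord // X`: monotone maps `f` with `α(a) ≤ β(f(a))`. -/
@[ext]
structure OrdCommaHom (A B : OrdComma X) : Type u where
  toFun : A.carrier → B.carrier
  mono : Monotone toFun
  le : ∀ a, A.map a ≤ B.map (toFun a)

instance : Category (OrdComma X) where
  Hom := OrdCommaHom
  id A := ⟨id, monotone_id, fun _ => le_refl _⟩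
  comp f g := ⟨OrdCommaHom.toFun g ∘ OrdCommaHom.toFun f,
    (OrdCommaHom.mono g).comp (OrdCommaHom.mono f),
    fun a => (OrdCommaHom.le f a).trans (OrdCommaHom.le g _)⟩
  id_comp _ := rfl
  comp_id _ := rfl
  assoc _ _ _ := rfl

/-- The underlying function of a morphism in `Ord // X`. -/
def OrdComma.app {A B : OrdComma X} (f : A ⟶ B) : A.carrier → B.carrier :=
  OrdCommaHom.toFun f

/-! ### The category `Fam(X)` of set-indexed families of elements of `X` -/

variable (X) in
/-- Objects of `Fam(X)`: families `(α_j)_{j ∈ J}` of elements of `X`. -/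
structure FamCat : Type (u + 1) where
  idx : Type u
  val : idx → X

/-- Morphisms in `Fam(X)`: functions `f : J → K` with `α_j ≤ β_{f(j)}`. -/
@[ext]
structure FamHom (A B : FamCat X) : Type u where
  toFun : A.idx → B.idx
  le : ∀ j, A.val j ≤ B.val (toFun j)

instance : Category (FamCat X) where
  Hom := FamHom
  id A := ⟨id, fun _ => le_refl _⟩
  comp f g := ⟨FamHom.toFun g ∘ FamHom.toFun f,
    fun a => (FamHom.le f a).trans (FamHom.le g _)⟩
  id_comp _ := rfl
  comp_id _ := rfl
  assoc _ _ _ := rfl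

/-- The underlying function of a morphism in `Fam(X)`. -/
def FamCat.app {A B : FamCat X} (f : A ⟶ B) : A.idx → B.idx :=
  FamHom.toFun f

/-! ### The category `Ord ×_Set Fam(X)` -/

variable (X) in
/-- Objects of `Ord ×_Set Fam(X)`: an ordered set `C` with an arbitrary function
`χ : C → X`. -/
structure OrdFam : Type (u + 1) where
  carrier : Type u
  [str : Preorder carrier]
  map : carrier → X

attribute [instance] OrdFam.str

/-- Morphisms in `Ord ×_Set Fam(X)`: monotone maps `f` with `χ(c) ≤ ψ(f(c))`. -/
@[ext]
structure OrdFamHom (A B : OrdFam X) : Type u where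
  toFun : A.carrier → B.carrier
  mono : Monotone toFun
  le : ∀ a, A.map a ≤ B.map (toFun a)

instance : Category (OrdFam X) where
  Hom := OrdFamHom
  id A := ⟨id, monotone_id, fun _ => le_refl _⟩
  comp f g := ⟨OrdFamHom.toFun g ∘ OrdFamHom.toFun f,
    (OrdFamHom.mono g).comp (OrdFamHom.mono f),
    fun a => (OrdFamHom.le f a).trans (OrdFamHom.le g _)⟩
  id_comp _ := rfl
  comp_id _ := rfl
  assoc _ _ _ := rfl

/-! ### Functors between these categories -/

variable (X) in
/-- The forgetful functor `Ord // X ⥤ Ord`. -/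
def ordCommaForget : OrdComma X ⥤ Preord.{u} where
  obj A := Preord.of A.carrier
  map f := ConcreteCategory.ofHom (C := Preord) ⟨OrdCommaHom.toFun f, OrdCommaHom.mono f⟩
  map_id _ := rfl
  map_comp _ _ := rfl

variable (X) in
/-- The forgetful functor `Ord // X ⥤ Fam(X)`, `(A, α) ↦ (α(a))_{a ∈ A}`. -/
def ordCommaToFam : OrdComma X ⥤ FamCat X where
  obj A := ⟨A.carrier, A.map⟩
  map f := ⟨OrdCommaHom.toFun f, OrdCommaHom.le f⟩
  map_id _ := rfl
  map_comp _ _ := rfl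

variable (X) in
/-- The projection `ρ₁ : Ord ×_Set Fam(X) ⥤ Ord`. -/
def rho₁ : OrdFam X ⥤ Preord.{u} where
  obj A := Preord.of A.carrier
  map f := ConcreteCategory.ofHom (C := Preord) ⟨OrdFamHom.toFun f, OrdFamHom.mono f⟩
  map_id _ := rfl
  map_comp _ _ := rfl

variable (X) in
/-- The projection `ρ₂ : Ord ×_Set Fam(X) ⥤ Fam(X)`. -/
def rho₂ : OrdFam X ⥤ FamCat X where
  obj A := ⟨A.carrier, A.map⟩
  map f := ⟨OrdFamHom.toFun f, OrdFamHom.le f⟩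
  map_id _ := rfl
  map_comp _ _ := rfl

/-! ### Restrictions `f_x : A_x → B_x` -/

/-- For `(A, α)` in `Ord // X` and `x ∈ X`, the ordered set `A_x = {a ∈ A : x ≤ α(a)}`. -/
def OrdComma.fiber (A : OrdComma X) (x : X) : Preord.{u} :=
  Preord.of {a : A.carrier // x ≤ A.map a}

/-- The restriction `f_x : A_x → B_x` of a morphism `f : (A, α) ⟶ (B, β)` of `Ord // X`. -/
def OrdComma.fiberMap {A B : OrdComma X} (f : A ⟶ B) (x : X) :
    A.fiber x ⟶ B.fiber x :=
  ConcreteCategory.ofHom (C := Preord) ⟨fun a => ⟨OrdCommaHom.toFun f a.1, a.2.trans (OrdCommaHom.le f a.1)⟩,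
    fun _ _ h => OrdCommaHom.mono f h⟩



variable {X : Type u} [Preorder X]

theorem OrdComma.hasPullbacks (hm : LocallyBinaryMeets X) :
    HasPullbacks (OrdComma X) := by
  have key : ∀ {A B C : OrdComma X} (f : A ⟶ C) (g : B ⟶ C), HasLimit (cospan f g) := by
    intro A B C f g
    have hmeet : ∀ p : {p : A.carrier × B.carrier //
        OrdCommaHom.toFun f p.1 = OrdCommaHom.toFun g p.2},
        ∃ m, IsMeet (A.map p.1.1) (B.map p.1.2) m := fun p =>
      hm (C.map (OrdCommaHom.toFun f p.1.1)) _ _ (OrdCommaHom.le f p.1.1)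
        (by rw [p.2]; exact OrdCommaHom.le g p.1.2)
    choose μ hμ using hmeet
    let P : OrdComma X :=
      { carrier := {p : A.carrier × B.carrier //
          OrdCommaHom.toFun f p.1 = OrdCommaHom.toFun g p.2}
        map := μ
        mono := fun p q h => by
          have hpq : p.1 ≤ q.1 := h
          exact (hμ q).2.2 _ ((hμ p).1.trans (A.mono (Prod.le_def.mp hpq).1))
            ((hμ p).2.1.trans (B.mono (Prod.le_def.mp hpq).2)) }
    let pfst : P ⟶ A := ⟨fun p => p.1.1, fun _ _ h => h.1, fun p => (hμ p).1⟩
    let psnd : P ⟶ B := ⟨fun p => p.1.2, fun _ _ h => h.2, fun p => (hμ p).2.1⟩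
    have eq : pfst ≫ f = psnd ≫ g := OrdCommaHom.ext (funext fun p => p.2)
    refine HasLimit.mk ⟨_, PullbackCone.IsLimit.mk eq
      (fun s => ⟨fun d => ⟨(OrdCommaHom.toFun s.fst d, OrdCommaHom.toFun s.snd d),
          congrFun (congrArg OrdCommaHom.toFun s.condition) d⟩,
        fun _ _ h => ⟨OrdCommaHom.mono s.fst h, OrdCommaHom.mono s.snd h⟩,
        fun d => (hμ _).2.2 _ (OrdCommaHom.le s.fst d) (OrdCommaHom.le s.snd d)⟩)
      (fun s => rfl) (fun s => rfl) (fun s m h1 h2 => ?_)⟩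
    apply OrdCommaHom.ext
    funext d
    exact Subtype.ext (Prod.ext (congrFun (congrArg OrdCommaHom.toFun h1) d)
      (congrFun (congrArg OrdCommaHom.toFun h2) d))
  exact @hasPullbacks_of_hasLimit_cospan _ _ (fun {A B C f g} => key f g)

theorem FamCat.hasPullbacks (hm : LocallyBinaryMeets X) :
    HasPullbacks (FamCat X) := by
  have key : ∀ {A B C : FamCat X} (f : A ⟶ C) (g : B ⟶ C), HasLimit (cospan f g) := by
    intro A B C f g
    have hmeet : ∀ p : {p : A.idx × B.idx // FamHom.toFun f p.1 = FamHom.toFun g p.2},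
        ∃ m, IsMeet (A.val p.1.1) (B.val p.1.2) m := fun p =>
      hm (C.val (FamHom.toFun f p.1.1)) _ _ (FamHom.le f p.1.1)
        (by rw [p.2]; exact FamHom.le g p.1.2)
    choose μ hμ using hmeet
    let P : FamCat X :=
      { idx := {p : A.idx × B.idx // FamHom.toFun f p.1 = FamHom.toFun g p.2}
        val := μ }
    let pfst : P ⟶ A := ⟨fun p => p.1.1, fun p => (hμ p).1⟩
    let psnd : P ⟶ B := ⟨fun p => p.1.2, fun p => (hμ p).2.1⟩
    have eq : pfst ≫ f = psnd ≫ g := FamHom.ext (funext fun p => p.2)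
    refine HasLimit.mk ⟨_, PullbackCone.IsLimit.mk eq
      (fun s => ⟨fun d => ⟨(FamHom.toFun s.fst d, FamHom.toFun s.snd d),
          congrFun (congrArg FamHom.toFun s.condition) d⟩,
        fun d => (hμ _).2.2 _ (FamHom.le s.fst d) (FamHom.le s.snd d)⟩)
      (fun s => rfl) (fun s => rfl) (fun s m h1 h2 => ?_)⟩
    apply FamHom.ext
    funext d
    exact Subtype.ext (Prod.ext (congrFun (congrArg FamHom.toFun h1) d)
      (congrFun (congrArg FamHom.toFun h2) d))
  exact @hasPullbacks_of_hasLimit_cospan _ _ (fun {A B C f g} => key f g)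

theorem OrdFam.hasPullbacks (hm : LocallyBinaryMeets X) :
    HasPullbacks (OrdFam X) := by
  have key : ∀ {A B C : OrdFam X} (f : A ⟶ C) (g : B ⟶ C), HasLimit (cospan f g) := by
    intro A B C f g
    have hmeet : ∀ p : {p : A.carrier × B.carrier //
        OrdFamHom.toFun f p.1 = OrdFamHom.toFun g p.2},
        ∃ m, IsMeet (A.map p.1.1) (B.map p.1.2) m := fun p =>
      hm (C.map (OrdFamHom.toFun f p.1.1)) _ _ (OrdFamHom.le f p.1.1)
        (by rw [p.2]; exact OrdFamHom.le g p.1.2)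
    choose μ hμ using hmeet
    let P : OrdFam X :=
      { carrier := {p : A.carrier × B.carrier //
          OrdFamHom.toFun f p.1 = OrdFamHom.toFun g p.2}
        map := μ }
    let pfst : P ⟶ A := ⟨fun p => p.1.1, fun _ _ h => h.1, fun p => (hμ p).1⟩
    let psnd : P ⟶ B := ⟨fun p => p.1.2, fun _ _ h => h.2, fun p => (hμ p).2.1⟩
    have eq : pfst ≫ f = psnd ≫ g := OrdFamHom.ext (funext fun p => p.2)
    refine HasLimit.mk ⟨_, PullbackCone.IsLimit.mk eq
      (fun s => ⟨fun d => ⟨(OrdFamHom.toFun s.fst d, OrdFamHom.toFun s.snd d),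
          congrFun (congrArg OrdFamHom.toFun s.condition) d⟩,
        fun _ _ h => ⟨OrdFamHom.mono s.fst h, OrdFamHom.mono s.snd h⟩,
        fun d => (hμ _).2.2 _ (OrdFamHom.le s.fst d) (OrdFamHom.le s.snd d)⟩)
      (fun s => rfl) (fun s => rfl) (fun s m h1 h2 => ?_)⟩
    apply OrdFamHom.ext
    funext d
    exact Subtype.ext (Prod.ext (congrFun (congrArg OrdFamHom.toFun h1) d)
      (congrFun (congrArg OrdFamHom.toFun h2) d))
  exact @hasPullbacks_of_hasLimit_cospan _ _ (fun {A B C f g} => key f g)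



variable (X : Type u) [Preorder X]

/-- The set of connected components of an ordered set `X`: the quotient of `X` by the
equivalence relation generated by `≤` (zigzags). -/
def ConnComp : Type u := Quot (fun a b : X => a ≤ b)

/-- The connected component of `X` corresponding to `i`, as an ordered set. -/
def Component (i : ConnComp X) : Type u :=
  {x : X // Quot.mk (fun a b : X => a ≤ b) x = i}

instance (i : ConnComp X) : Preorder (Component X i) :=
  Subtype.preorder _

/-- The comparison functor `Ord // X ⥤ ∏_{i ∈ I} Ord // X_i`, where `(X_i)_{i ∈ I}` are the
connected components of `X`: it sends `(A, α)` to the family of (co)restrictions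
`(A_i, α_i : A_i → X_i)` with `A_i = α⁻¹(X_i)`. -/
def componentFunctor : OrdComma X ⥤ (∀ i : ConnComp X, OrdComma (Component X i)) where
  obj A := fun i =>
    { carrier := {a : A.carrier // Quot.mk (fun a b : X => a ≤ b) (A.map a) = i}
      map := fun a => ⟨A.map a.1, a.2⟩
      mono := fun _ _ h => A.mono h }
  map {A B} f := fun i =>
    { toFun := fun a => ⟨OrdCommaHom.toFun f a.1,
        (Quot.sound (OrdCommaHom.le f a.1)).symm.trans a.2⟩
      mono := fun _ _ h => OrdCommaHom.mono f h
      le := fun a => OrdCommaHom.le f a.1 }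
  map_id A := by
    funext i
    apply OrdCommaHom.ext
    funext a
    rfl
  map_comp f g := by
    funext i
    apply OrdCommaHom.ext
    funext a
    rfl






/-! ### Auxiliary development for statement12 -/

section Transfer

variable {C' : Type*} {D' : Type*} [Category C'] [Category D']

theorem comparison_isEquivalence_congr {L : C' ⥤ D'} {R R' : D' ⥤ C'}
    (adj : L ⊣ R) (adj' : L ⊣ R') :
    (Monad.comparison adj).IsEquivalence → (Monad.comparison adj').IsEquivalence := by
  intro hK
  let e : R ≅ R' := Adjunction.rightAdjointUniq adj adj'
  have f_η : ∀ X : C', adj.toMonad.η.app X ≫ (Functor.isoWhiskerLeft L e).hom.app X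
      = adj'.toMonad.η.app X := by
    intro X
    show adj.unit.app X ≫ (Adjunction.rightAdjointUniq adj adj').hom.app (L.obj X)
      = adj'.unit.app X
    simp
  have f_μ : ∀ X : C', adj.toMonad.μ.app X ≫ (Functor.isoWhiskerLeft L e).hom.app X =
      (adj.toMonad.map ((Functor.isoWhiskerLeft L e).hom.app X) ≫
        (Functor.isoWhiskerLeft L e).hom.app (adj'.toMonad.obj X)) ≫ adj'.toMonad.μ.app X := by
    intro X
    dsimp [Adjunction.toMonad]
    have hn := e.hom.naturality (adj.counit.app (L.obj X))
    dsimp at hn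
    rw [hn]
    rw [e.hom.naturality (L.map (e.hom.app (L.obj X)))]
    rw [Category.assoc, ← R'.map_comp]
    rw [Adjunction.rightAdjointUniq_hom_app_counit adj adj']
  let h : adj.toMonad ≅ adj'.toMonad := MonadIso.mk (Functor.isoWhiskerLeft L e) f_η f_μ
  let E : Monad.Algebra adj.toMonad ≌ Monad.Algebra adj'.toMonad :=
    Monad.algebraEquivOfIsoMonads h
  have hiso : Monad.comparison adj ⋙ E.functor ≅ Monad.comparison adj' := by
    refine NatIso.ofComponents (fun X => Monad.Algebra.isoMk (e.app X) ?_) ?_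
    · show (L ⋙ R').map (e.hom.app X) ≫ R'.map (adj'.counit.app X) =
        (h.inv.app (R.obj X) ≫ R.map (adj.counit.app X)) ≫ e.hom.app X
      have : h.inv.app (R.obj X) = e.inv.app (L.obj (R.obj X)) := rfl
      rw [this]
      have hn := e.hom.naturality (adj.counit.app X)
      dsimp at hn ⊢
      erw [Category.assoc, hn, Iso.inv_hom_id_app_assoc]
      rw [← R'.map_comp, Adjunction.rightAdjointUniq_hom_app_counit adj adj']
    · intro X Y g
      apply Monad.Algebra.Hom.ext
      exact e.hom.naturality g
  have h1 : (Monad.comparison adj ⋙ E.functor).IsEquivalence := by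
    infer_instance
  exact Functor.isEquivalence_of_iso hiso

theorem comparison_isEquivalence_iff {L : C' ⥤ D'} {R R' : D' ⥤ C'}
    (adj : L ⊣ R) (adj' : L ⊣ R') :
    (Monad.comparison adj).IsEquivalence ↔ (Monad.comparison adj').IsEquivalence :=
  ⟨comparison_isEquivalence_congr adj adj', comparison_isEquivalence_congr adj' adj⟩

end Transfer

/-! ### chosen binary meets -/

section Meets

variable {X : Type u} [Preorder X]

noncomputable def mt (hm : LocallyBinaryMeets X) {x y z : X} (hy : y ≤ x) (hz : z ≤ x) : X :=
  (hm x y z hy hz).choose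

theorem mt_spec (hm : LocallyBinaryMeets X) {x y z : X} (hy : y ≤ x) (hz : z ≤ x) :
    IsMeet y z (mt hm hy hz) :=
  (hm x y z hy hz).choose_spec

theorem mt_le_left (hm : LocallyBinaryMeets X) {x y z : X} (hy : y ≤ x) (hz : z ≤ x) :
    mt hm hy hz ≤ y := (mt_spec hm hy hz).1

theorem mt_le_right (hm : LocallyBinaryMeets X) {x y z : X} (hy : y ≤ x) (hz : z ≤ x) :
    mt hm hy hz ≤ z := (mt_spec hm hy hz).2.1

theorem le_mt (hm : LocallyBinaryMeets X) {x y z : X} (hy : y ≤ x) (hz : z ≤ x)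
    {u : X} (h1 : u ≤ y) (h2 : u ≤ z) : u ≤ mt hm hy hz := (mt_spec hm hy hz).2.2 u h1 h2

theorem mt_le_mt (hm : LocallyBinaryMeets X) {x y z x' y' : X}
    (hy : y ≤ x) (hz : z ≤ x) (hy' : y' ≤ x') (hz' : z ≤ x') (hyy : y ≤ y') :
    mt hm hy hz ≤ mt hm hy' hz' :=
  le_mt hm hy' hz' ((mt_le_left hm hy hz).trans hyy) (mt_le_right hm hy hz)

end Meets

/-! ### Explicit pullback functor and adjunction in `OrdFam X` -/

section PbA

variable {X : Type u} [Preorder X]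

/-- application helper -/
abbrev aA {A B : OrdFam X} (g : A ⟶ B) : A.carrier → B.carrier := OrdFamHom.toFun g

theorem aA_mono {A B : OrdFam X} (g : A ⟶ B) : Monotone (aA g) := OrdFamHom.mono g

theorem aA_le {A B : OrdFam X} (g : A ⟶ B) (a : A.carrier) :
    A.map a ≤ B.map (aA g a) := OrdFamHom.le g a

theorem OrdFamHom.ext' {A B : OrdFam X} {g h : A ⟶ B} (H : ∀ a, aA g a = aA h a) : g = h :=
  OrdFamHom.ext (funext H)

theorem overA_ext {Z : OrdFam X} {M N : Over Z} {g h : M ⟶ N}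
    (H : ∀ a, aA g.left a = aA h.left a) : g = h := by
  apply CommaMorphism.ext
  · exact OrdFamHom.ext' H
  · apply Subsingleton.elim

theorem overA_w {Z : OrdFam X} {M N : Over Z} (g : M ⟶ N) (a : M.left.carrier) :
    aA N.hom (aA g.left a) = aA M.hom a :=
  congrFun (congrArg OrdFamHom.toFun (Over.w g)) a

variable (hm : LocallyBinaryMeets X) {A B : OrdFam X} (f : A ⟶ B)

def pbACarrier (N : Over B) : Type u :=
  {p : N.left.carrier × A.carrier // aA N.hom p.1 = aA f p.2}

instance (N : Over B) : Preorder (pbACarrier f N) :=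
  inferInstanceAs (Preorder {p : N.left.carrier × A.carrier // _})

/-- make an element -/
def pbAmk (N : Over B) (n : N.left.carrier) (a : A.carrier) (h : aA N.hom n = aA f a) :
    pbACarrier f N := ⟨(n, a), h⟩

def pbA1 {N : Over B} (p : pbACarrier f N) : N.left.carrier := p.1.1
def pbA2 {N : Over B} (p : pbACarrier f N) : A.carrier := p.1.2

theorem pbAeq {N : Over B} (p : pbACarrier f N) : aA N.hom (pbA1 f p) = aA f (pbA2 f p) := p.2

theorem pbAcases {N : Over B} (p : pbACarrier f N) :
    p = pbAmk f N (pbA1 f p) (pbA2 f p) (pbAeq f p) := rfl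

theorem pbAext {N : Over B} {p q : pbACarrier f N}
    (h1 : pbA1 f p = pbA1 f q) (h2 : pbA2 f p = pbA2 f q) : p = q := by
  apply Subtype.ext
  apply Prod.ext h1 h2

theorem pbAle {N : Over B} {p q : pbACarrier f N}
    (h1 : pbA1 f p ≤ pbA1 f q) (h2 : pbA2 f p ≤ pbA2 f q) : p ≤ q := ⟨h1, h2⟩

theorem pbAle1 {N : Over B} {p q : pbACarrier f N} (h : p ≤ q) : pbA1 f p ≤ pbA1 f q := h.1
theorem pbAle2 {N : Over B} {p q : pbACarrier f N} (h : p ≤ q) : pbA2 f p ≤ pbA2 f q := h.2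

theorem pbA_le1 (N : Over B) (p : pbACarrier f N) :
    N.left.map (pbA1 f p) ≤ B.map (aA f (pbA2 f p)) := p.2 ▸ aA_le N.hom p.1.1

theorem pbA_le2 (N : Over B) (p : pbACarrier f N) :
    A.map (pbA2 f p) ≤ B.map (aA f (pbA2 f p)) := aA_le f (pbA2 f p)

noncomputable def pbAObj (N : Over B) : OrdFam X where
  carrier := pbACarrier f N
  map := fun p => mt hm (pbA_le1 f N p) (pbA_le2 f N p)

theorem pbAObj_map {N : Over B} (p : pbACarrier f N) :
    (pbAObj hm f N).map p = mt hm (pbA_le1 f N p) (pbA_le2 f N p) := rfl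


theorem pbAmap_le_left {N : Over B} (p : pbACarrier f N) :
    (pbAObj hm f N).map p ≤ N.left.map (pbA1 f p) :=
  mt_le_left hm (pbA_le1 f N p) (pbA_le2 f N p)

theorem pbAmap_le_right {N : Over B} (p : pbACarrier f N) :
    (pbAObj hm f N).map p ≤ A.map (pbA2 f p) :=
  mt_le_right hm (pbA_le1 f N p) (pbA_le2 f N p)

theorem le_pbAmap {N : Over B} {w : X} (p : pbACarrier f N)
    (h1 : w ≤ N.left.map (pbA1 f p)) (h2 : w ≤ A.map (pbA2 f p)) :
    w ≤ (pbAObj hm f N).map p :=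
  le_mt hm (pbA_le1 f N p) (pbA_le2 f N p) h1 h2

noncomputable def pbAProj (N : Over B) : pbAObj hm f N ⟶ A where
  toFun := pbA2 f
  mono := fun _ _ h => pbAle2 f h
  le := fun p => pbAmap_le_right hm f p

noncomputable def pbAHom {N N' : Over B} (k : N ⟶ N') :
    pbAObj hm f N ⟶ pbAObj hm f N' where
  toFun p := pbAmk f N' (aA k.left (pbA1 f p)) (pbA2 f p)
    ((overA_w k (pbA1 f p)).trans (pbAeq f p))
  mono := fun p q h => pbAle f (aA_mono k.left (pbAle1 f h)) (pbAle2 f (p := p) (q := q) h)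
  le := fun p => by
    refine le_pbAmap hm f _ ?_ ?_
    · exact (pbAmap_le_left hm f p).trans (aA_le k.left (pbA1 f p))
    · exact pbAmap_le_right hm f p

noncomputable def pbA : Over B ⥤ Over A where
  obj N := Over.mk (pbAProj hm f N)
  map {N N'} k := Over.homMk (pbAHom hm f k) (by apply OrdFamHom.ext'; intro p; exact rfl)
  map_id N := by apply overA_ext; intro p; rfl
  map_comp k l := by apply overA_ext; intro p; rfl



noncomputable def adjAtoFun (M : Over A) (N : Over B) (h : (Over.map f).obj M ⟶ N) :
    M.left ⟶ pbAObj hm f N where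
  toFun m := pbAmk f N (aA h.left m) (aA M.hom m) (overA_w h m)
  mono := fun m m' hle => by
    refine pbAle f ?_ ?_
    · exact aA_mono h.left hle
    · exact aA_mono M.hom hle
  le := fun m => by
    refine le_pbAmap hm f _ ?_ ?_
    · exact aA_le h.left m
    · exact aA_le M.hom m

noncomputable def adjAinvFun (M : Over A) (N : Over B) (k : M ⟶ (pbA hm f).obj N) :
    ((Over.map f).obj M).left ⟶ N.left where
  toFun m := pbA1 f (aA k.left m)
  mono := fun m m' hle => pbAle1 f (aA_mono k.left hle)
  le := fun m => (aA_le k.left m).trans (pbAmap_le_left hm f _)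

theorem adjA_w2 (M : Over A) (N : Over B) (k : M ⟶ (pbA hm f).obj N) (m : M.left.carrier) :
    pbA2 f (aA k.left m) = aA M.hom m :=
  overA_w k m

noncomputable def adjA : Over.map f ⊣ pbA hm f :=
  Adjunction.mkOfHomEquiv
    { homEquiv := fun M N =>
        { toFun := fun h => Over.homMk (adjAtoFun hm f M N h)
            (by apply OrdFamHom.ext'; intro m; exact rfl)
          invFun := fun k => Over.homMk (adjAinvFun hm f M N k)
            (by
              apply OrdFamHom.ext'; intro m
              show aA N.hom (pbA1 f (aA k.left m)) = aA f (aA M.hom m)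
              rw [pbAeq f (aA k.left m)]
              exact congrArg (aA f) (adjA_w2 hm f M N k m))
          left_inv := fun h => by apply overA_ext; intro m; exact rfl
          right_inv := fun k => by
            apply overA_ext; intro m
            refine pbAext f ?_ ?_
            · exact rfl
            · exact (adjA_w2 hm f M N k m).symm
        }
      homEquiv_naturality_left_symm := fun {M M' N} g h => by
        apply overA_ext; intro m; exact rfl
      homEquiv_naturality_right := fun {M N N'} h g => by
        apply overA_ext; intro m; exact rfl }

end PbA

/-! ### Explicit pullback functor and adjunction in `Preord` -/

section PbP

/-- application helper -/
abbrev aP {A B : Preord.{u}} (g : A ⟶ B) : A → B := g.hom.toFun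

theorem aP_mono {A B : Preord.{u}} (g : A ⟶ B) : Monotone (aP g) := g.hom.monotone

theorem ordHom_ext' {A B : Preord.{u}} {g h : A ⟶ B} (H : ∀ a, aP g a = aP h a) : g = h :=
  Preord.hom_ext (OrderHom.ext _ _ (funext H))

theorem overP_ext {Z : Preord.{u}} {M N : Over Z} {g h : M ⟶ N}
    (H : ∀ a, aP g.left a = aP h.left a) : g = h := by
  apply CommaMorphism.ext
  · exact ordHom_ext' H
  · apply Subsingleton.elim

theorem overP_w {Z : Preord.{u}} {M N : Over Z} (g : M ⟶ N) (a : M.left) :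
    aP N.hom (aP g.left a) = aP M.hom a :=
  congrFun (congrArg (fun k => k.hom.toFun) (Over.w g)) a

variable {A B : Preord.{u}} (f : A ⟶ B)

def pbPCarrier (N : Over B) : Type u :=
  {p : N.left × A // aP N.hom p.1 = aP f p.2}

instance (N : Over B) : Preorder (pbPCarrier f N) :=
  inferInstanceAs (Preorder {p : N.left × A // _})

def pbPmk (N : Over B) (n : N.left) (a : A) (h : aP N.hom n = aP f a) :
    pbPCarrier f N := ⟨(n, a), h⟩

def pbP1 {N : Over B} (p : pbPCarrier f N) : N.left := p.1.1
def pbP2 {N : Over B} (p : pbPCarrier f N) : A := p.1.2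

theorem pbPeq {N : Over B} (p : pbPCarrier f N) : aP N.hom (pbP1 f p) = aP f (pbP2 f p) := p.2

theorem pbPext {N : Over B} {p q : pbPCarrier f N}
    (h1 : pbP1 f p = pbP1 f q) (h2 : pbP2 f p = pbP2 f q) : p = q := by
  apply Subtype.ext
  apply Prod.ext h1 h2

theorem pbPle {N : Over B} {p q : pbPCarrier f N}
    (h1 : pbP1 f p ≤ pbP1 f q) (h2 : pbP2 f p ≤ pbP2 f q) : p ≤ q := ⟨h1, h2⟩

theorem pbPle1 {N : Over B} {p q : pbPCarrier f N} (h : p ≤ q) : pbP1 f p ≤ pbP1 f q := h.1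
theorem pbPle2 {N : Over B} {p q : pbPCarrier f N} (h : p ≤ q) : pbP2 f p ≤ pbP2 f q := h.2

def pbPObj (N : Over B) : Preord.{u} := Preord.of (pbPCarrier f N)

def pbPProj (N : Over B) : pbPObj f N ⟶ A := ConcreteCategory.ofHom (C := Preord) {
  toFun := pbP2 f
  monotone' := fun _ _ h => pbPle2 f h }

def pbPHom {N N' : Over B} (k : N ⟶ N') : pbPObj f N ⟶ pbPObj f N' := ConcreteCategory.ofHom (C := Preord) {
  toFun p := pbPmk f N' (aP k.left (pbP1 f p)) (pbP2 f p)
    ((overP_w k (pbP1 f p)).trans (pbPeq f p))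
  monotone' := fun p q h => by
    refine pbPle f ?_ ?_
    · exact aP_mono k.left (pbPle1 f h)
    · exact pbPle2 f (p := p) (q := q) h
  }

def pbP : Over B ⥤ Over A where
  obj N := Over.mk (pbPProj f N)
  map {N N'} k := Over.homMk (pbPHom f k) (by apply ordHom_ext'; intro p; exact rfl)
  map_id N := by apply overP_ext; intro p; exact rfl
  map_comp k l := by apply overP_ext; intro p; exact rfl

def adjPtoFun (M : Over A) (N : Over B) (h : (Over.map f).obj M ⟶ N) :
    M.left ⟶ pbPObj f N := ConcreteCategory.ofHom (C := Preord) {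
  toFun m := pbPmk f N (aP h.left m) (aP M.hom m) (overP_w h m)
  monotone' := fun m m' hle => by
    refine pbPle f ?_ ?_
    · exact aP_mono h.left hle
    · exact aP_mono M.hom hle
  }

def adjPinvFun (M : Over A) (N : Over B) (k : M ⟶ (pbP f).obj N) :
    ((Over.map f).obj M).left ⟶ N.left := ConcreteCategory.ofHom (C := Preord) {
  toFun m := pbP1 f (aP k.left m)
  monotone' := fun m m' hle => pbPle1 f (aP_mono k.left hle) }

theorem adjP_w2 (M : Over A) (N : Over B) (k : M ⟶ (pbP f).obj N) (m : M.left) :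
    pbP2 f (aP k.left m) = aP M.hom m :=
  overP_w k m

def adjP : Over.map f ⊣ pbP f :=
  Adjunction.mkOfHomEquiv
    { homEquiv := fun M N =>
        { toFun := fun h => Over.homMk (adjPtoFun f M N h)
            (by apply ordHom_ext'; intro m; exact rfl)
          invFun := fun k => Over.homMk (adjPinvFun f M N k)
            (by
              apply ordHom_ext'; intro m
              show aP N.hom (pbP1 f (aP k.left m)) = aP f (aP M.hom m)
              rw [pbPeq f (aP k.left m)]
              exact congrArg (aP f) (adjP_w2 f M N k m))
          left_inv := fun h => by apply overP_ext; intro m; exact rfl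
          right_inv := fun k => by
            apply overP_ext; intro m
            refine pbPext f ?_ ?_
            · exact rfl
            · exact (adjP_w2 f M N k m).symm
        }
      homEquiv_naturality_left_symm := fun {M M' N} g h => by
        apply overP_ext; intro m; exact rfl
      homEquiv_naturality_right := fun {M N N'} h g => by
        apply overP_ext; intro m; exact rfl }

end PbP

/-! ### Explicit pullback functor and adjunction in `FamCat X` -/

section PbF

variable {X : Type u} [Preorder X]

abbrev aF {A B : FamCat X} (g : A ⟶ B) : A.idx → B.idx := FamHom.toFun g

theorem aF_le {A B : FamCat X} (g : A ⟶ B) (a : A.idx) :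
    A.val a ≤ B.val (aF g a) := FamHom.le g a

theorem FamHom.ext' {A B : FamCat X} {g h : A ⟶ B} (H : ∀ a, aF g a = aF h a) : g = h :=
  FamHom.ext (funext H)

theorem overF_ext {Z : FamCat X} {M N : Over Z} {g h : M ⟶ N}
    (H : ∀ a, aF g.left a = aF h.left a) : g = h := by
  apply CommaMorphism.ext
  · exact FamHom.ext' H
  · apply Subsingleton.elim

theorem overF_w {Z : FamCat X} {M N : Over Z} (g : M ⟶ N) (a : M.left.idx) :
    aF N.hom (aF g.left a) = aF M.hom a :=
  congrFun (congrArg FamHom.toFun (Over.w g)) a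

variable (hm : LocallyBinaryMeets X) {A B : FamCat X} (f : A ⟶ B)

def pbFCarrier (N : Over B) : Type u :=
  {p : N.left.idx × A.idx // aF N.hom p.1 = aF f p.2}

def pbFmk (N : Over B) (n : N.left.idx) (a : A.idx) (h : aF N.hom n = aF f a) :
    pbFCarrier f N := ⟨(n, a), h⟩

def pbF1 {N : Over B} (p : pbFCarrier f N) : N.left.idx := p.1.1
def pbF2 {N : Over B} (p : pbFCarrier f N) : A.idx := p.1.2

theorem pbFeq {N : Over B} (p : pbFCarrier f N) : aF N.hom (pbF1 f p) = aF f (pbF2 f p) := p.2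

theorem pbFext {N : Over B} {p q : pbFCarrier f N}
    (h1 : pbF1 f p = pbF1 f q) (h2 : pbF2 f p = pbF2 f q) : p = q := by
  apply Subtype.ext
  apply Prod.ext h1 h2

theorem pbF_le1 (N : Over B) (p : pbFCarrier f N) :
    N.left.val (pbF1 f p) ≤ B.val (aF f (pbF2 f p)) := p.2 ▸ aF_le N.hom p.1.1

theorem pbF_le2 (N : Over B) (p : pbFCarrier f N) :
    A.val (pbF2 f p) ≤ B.val (aF f (pbF2 f p)) := aF_le f (pbF2 f p)

noncomputable def pbFObj (N : Over B) : FamCat X where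
  idx := pbFCarrier f N
  val := fun p => mt hm (pbF_le1 f N p) (pbF_le2 f N p)

theorem pbFmap_le_left {N : Over B} (p : pbFCarrier f N) :
    (pbFObj hm f N).val p ≤ N.left.val (pbF1 f p) :=
  mt_le_left hm (pbF_le1 f N p) (pbF_le2 f N p)

theorem pbFmap_le_right {N : Over B} (p : pbFCarrier f N) :
    (pbFObj hm f N).val p ≤ A.val (pbF2 f p) :=
  mt_le_right hm (pbF_le1 f N p) (pbF_le2 f N p)

theorem le_pbFmap {N : Over B} {w : X} (p : pbFCarrier f N)
    (h1 : w ≤ N.left.val (pbF1 f p)) (h2 : w ≤ A.val (pbF2 f p)) :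
    w ≤ (pbFObj hm f N).val p :=
  le_mt hm (pbF_le1 f N p) (pbF_le2 f N p) h1 h2

noncomputable def pbFProj (N : Over B) : pbFObj hm f N ⟶ A where
  toFun := pbF2 f
  le := fun p => pbFmap_le_right hm f p

noncomputable def pbFHom {N N' : Over B} (k : N ⟶ N') :
    pbFObj hm f N ⟶ pbFObj hm f N' where
  toFun p := pbFmk f N' (aF k.left (pbF1 f p)) (pbF2 f p)
    ((overF_w k (pbF1 f p)).trans (pbFeq f p))
  le := fun p => by
    refine le_pbFmap hm f _ ?_ ?_
    · exact (pbFmap_le_left hm f p).trans (aF_le k.left (pbF1 f p))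
    · exact pbFmap_le_right hm f p

noncomputable def pbF : Over B ⥤ Over A where
  obj N := Over.mk (pbFProj hm f N)
  map {N N'} k := Over.homMk (pbFHom hm f k) (by apply FamHom.ext'; intro p; exact rfl)
  map_id N := by apply overF_ext; intro p; exact rfl
  map_comp k l := by apply overF_ext; intro p; exact rfl

noncomputable def adjFtoFun (M : Over A) (N : Over B) (h : (Over.map f).obj M ⟶ N) :
    M.left ⟶ pbFObj hm f N where
  toFun m := pbFmk f N (aF h.left m) (aF M.hom m) (overF_w h m)
  le := fun m => by
    refine le_pbFmap hm f _ ?_ ?_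
    · exact aF_le h.left m
    · exact aF_le M.hom m

noncomputable def adjFinvFun (M : Over A) (N : Over B) (k : M ⟶ (pbF hm f).obj N) :
    ((Over.map f).obj M).left ⟶ N.left where
  toFun m := pbF1 f (aF k.left m)
  le := fun m => (aF_le k.left m).trans (pbFmap_le_left hm f _)

theorem adjF_w2 (M : Over A) (N : Over B) (k : M ⟶ (pbF hm f).obj N) (m : M.left.idx) :
    pbF2 f (aF k.left m) = aF M.hom m :=
  overF_w k m

noncomputable def adjF : Over.map f ⊣ pbF hm f :=
  Adjunction.mkOfHomEquiv
    { homEquiv := fun M N =>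
        { toFun := fun h => Over.homMk (adjFtoFun hm f M N h)
            (by apply FamHom.ext'; intro m; exact rfl)
          invFun := fun k => Over.homMk (adjFinvFun hm f M N k)
            (by
              apply FamHom.ext'; intro m
              show aF N.hom (pbF1 f (aF k.left m)) = aF f (aF M.hom m)
              rw [pbFeq f (aF k.left m)]
              exact congrArg (aF f) (adjF_w2 hm f M N k m))
          left_inv := fun h => by apply overF_ext; intro m; exact rfl
          right_inv := fun k => by
            apply overF_ext; intro m
            refine pbFext f ?_ ?_
            · exact rfl
            · exact (adjF_w2 hm f M N k m).symm
        }
      homEquiv_naturality_left_symm := fun {M M' N} g h => by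
        apply overF_ext; intro m; exact rfl
      homEquiv_naturality_right := fun {M N N'} h g => by
        apply overF_ext; intro m; exact rfl }

end PbF

section Concrete

variable {X : Type u} [Preorder X] (hm : LocallyBinaryMeets X) {A B : OrdFam X} (f : A ⟶ B)

theorem adjA_counit_fun (N : Over B) (m : pbACarrier f N) :
    aA ((adjA hm f).counit.app N).left m = pbA1 f m := rfl

theorem adjA_unit_fun (M : Over A) (m : M.left.carrier) :
    aA ((adjA hm f).unit.app M).left m =
      pbAmk f ((Over.map f).obj M) m (aA M.hom m) (rfl) := rfl

end Concrete

/-! ### composition/congruence helpers -/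

section CompHelpers

variable {X : Type u} [Preorder X]

theorem overA_comp_fun {Z : OrdFam X} {M N P : Over Z} (g : M ⟶ N) (h : N ⟶ P)
    (m : M.left.carrier) : aA (g ≫ h).left m = aA h.left (aA g.left m) := rfl

theorem overA_congr {Z : OrdFam X} {M N : Over Z} {g h : M ⟶ N} (e : g = h)
    (m : M.left.carrier) : aA g.left m = aA h.left m := by rw [e]

theorem overP_comp_fun {Z : Preord.{u}} {M N P : Over Z} (g : M ⟶ N) (h : N ⟶ P)
    (m : M.left) : aP (g ≫ h).left m = aP h.left (aP g.left m) := rfl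

theorem overP_congr {Z : Preord.{u}} {M N : Over Z} {g h : M ⟶ N} (e : g = h)
    (m : M.left) : aP g.left m = aP h.left m := by rw [e]

theorem overF_comp_fun {Z : FamCat X} {M N P : Over Z} (g : M ⟶ N) (h : N ⟶ P)
    (m : M.left.idx) : aF (g ≫ h).left m = aF h.left (aF g.left m) := rfl

theorem overF_congr {Z : FamCat X} {M N : Over Z} {g h : M ⟶ N} (e : g = h)
    (m : M.left.idx) : aF g.left m = aF h.left m := by rw [e]

theorem algA_congr {Z : OrdFam X} {T : Monad (Over Z)} {x y : Monad.Algebra T}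
    {g h : x ⟶ y} (e : g = h) (m : x.A.left.carrier) :
    aA g.f.left m = aA h.f.left m := by rw [e]

theorem algP_congr {Z : Preord.{u}} {T : Monad (Over Z)} {x y : Monad.Algebra T}
    {g h : x ⟶ y} (e : g = h) (m : x.A.left) :
    aP g.f.left m = aP h.f.left m := by rw [e]

theorem algF_congr {Z : FamCat X} {T : Monad (Over Z)} {x y : Monad.Algebra T}
    {g h : x ⟶ y} (e : g = h) (m : x.A.left.idx) :
    aF g.f.left m = aF h.f.left m := by rw [e]

end CompHelpers

/-! ### Lifting along `rho₁` with bottom labels -/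

section Lift1

variable {X : Type u} [Preorder X] (hm : LocallyBinaryMeets X)
  (b₀ : X) (hb₀ : ∀ x : X, b₀ ≤ x)

def botObj (V : Preord.{u}) : OrdFam X := { carrier := ↑V, map := fun _ => b₀ }

variable {Z : OrdFam X}

def liftO (V : Over ((rho₁ X).obj Z)) : Over Z :=
  Over.mk (Y := botObj b₀ V.left)
    (⟨aP V.hom, aP_mono V.hom, fun _ => hb₀ _⟩ : botObj b₀ V.left ⟶ Z)

def liftOHom {V V' : Over ((rho₁ X).obj Z)} (k : V ⟶ V') :
    liftO b₀ hb₀ V ⟶ liftO b₀ hb₀ V' :=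
  Over.homMk
    (⟨aP k.left, aP_mono k.left, fun _ => le_refl b₀⟩ :
      botObj b₀ V.left ⟶ botObj b₀ V'.left)
    (by apply OrdFamHom.ext'; intro v; exact overP_w k v)

variable {A B : OrdFam X} (f : A ⟶ B)

/-- conversion of pullback carriers over B -/
def cPA {V : Over ((rho₁ X).obj B)} (p : pbPCarrier ((rho₁ X).map f) V) :
    pbACarrier f (liftO b₀ hb₀ (Z := B) V) := ⟨p.1, p.2⟩

def cAP {V : Over ((rho₁ X).obj B)} (p : pbACarrier f (liftO b₀ hb₀ (Z := B) V)) :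
    pbPCarrier ((rho₁ X).map f) V := ⟨p.1, p.2⟩

/-- conversion of pullback carriers of free objects over A -/
def cTPA {V : Over ((rho₁ X).obj A)}
    (p : pbPCarrier ((rho₁ X).map f) ((Over.map ((rho₁ X).map f)).obj V)) :
    pbACarrier f ((Over.map f).obj (liftO b₀ hb₀ (Z := A) V)) := ⟨p.1, p.2⟩

def cTAP {V : Over ((rho₁ X).obj A)}
    (p : pbACarrier f ((Over.map f).obj (liftO b₀ hb₀ (Z := A) V))) :
    pbPCarrier ((rho₁ X).map f) ((Over.map ((rho₁ X).map f)).obj V) := ⟨p.1, p.2⟩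

end Lift1

section Part1

variable {X : Type u} [Preorder X] (hm : LocallyBinaryMeets X)
  (b₀ : X) (hb₀ : ∀ x : X, b₀ ≤ x) {A B : OrdFam X} (f : A ⟶ B)

include hb₀

theorem part1_faithful (h : (Monad.comparison (adjA hm f)).Faithful) :
    (Monad.comparison (adjP ((rho₁ X).map f))).Faithful := by
  constructor
  intro V V' k k' e
  have e2 : (Monad.comparison (adjA hm f)).map (liftOHom b₀ hb₀ k) =
      (Monad.comparison (adjA hm f)).map (liftOHom b₀ hb₀ k') := by
    apply Monad.Algebra.Hom.ext
    apply overA_ext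
    intro q
    refine pbAext f ?_ ?_
    · exact congrArg (pbP1 ((rho₁ X).map f)) (algP_congr e (cAP b₀ hb₀ f q))
    · rfl
  have e3 := h.map_injective e2
  apply overP_ext
  intro v
  exact overA_congr e3 v

theorem part1_full (h : (Monad.comparison (adjA hm f)).Full) :
    (Monad.comparison (adjP ((rho₁ X).map f))).Full := by
  constructor
  intro V V' ψ
  -- lift ψ to an algebra morphism between the comparison images of the lifted objects
  let ψA : (Monad.comparison (adjA hm f)).obj (liftO b₀ hb₀ V) ⟶
      (Monad.comparison (adjA hm f)).obj (liftO b₀ hb₀ V') :=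
    { f := Over.homMk
        (⟨fun q => cPA b₀ hb₀ f (aP ψ.f.left (cAP b₀ hb₀ f q)),
          fun q q' hq => by exact aP_mono ψ.f.left hq,
          fun q => by
            refine le_pbAmap hm f _ ?_ ?_
            · exact pbAmap_le_left hm f q
            · exact le_of_le_of_eq (pbAmap_le_right hm f q)
                (congrArg A.map (overP_w ψ.f (cAP b₀ hb₀ f q)).symm)⟩ :
            (pbAObj hm f (liftO b₀ hb₀ V)) ⟶ (pbAObj hm f (liftO b₀ hb₀ V')))
        (by apply OrdFamHom.ext'; intro q; exact overP_w ψ.f (cAP b₀ hb₀ f q))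
      h := by
        apply overA_ext
        intro q
        exact overP_congr ψ.h ⟨q.1, q.2⟩ }
  obtain ⟨khat, hk⟩ := h.map_surjective ψA
  refine ⟨Over.homMk (ConcreteCategory.ofHom (C := Preord) ⟨fun v => aA khat.left v, fun v v' hv => aA_mono khat.left hv⟩ :
      V.left ⟶ V'.left) (by apply ordHom_ext'; intro v; exact overA_w khat v), ?_⟩
  apply Monad.Algebra.Hom.ext
  apply overP_ext
  intro p
  exact algA_congr hk (cPA b₀ hb₀ f p)

/-- The bottom-label lift of an algebra for the `Preord`-level monad. -/
noncomputable def hatAlg (y : Monad.Algebra (adjP ((rho₁ X).map f)).toMonad) :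
    Monad.Algebra (adjA hm f).toMonad where
  A := liftO b₀ hb₀ (Z := A) y.A
  a := Over.homMk
    (⟨fun q => aP y.a.left (cTAP b₀ hb₀ f q),
      fun q q' hq => by exact aP_mono y.a.left hq,
      fun q => by exact pbAmap_le_left hm f q⟩ :
        (pbAObj hm f ((Over.map f).obj (liftO b₀ hb₀ y.A))) ⟶ botObj b₀ y.A.left)
    (by apply OrdFamHom.ext'; intro q; exact overP_w y.a (cTAP b₀ hb₀ f q))
  unit := by
    apply overA_ext
    intro n
    exact overP_congr y.unit n
  assoc := by
    apply overA_ext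
    intro q
    exact overP_congr y.assoc ⟨q.1, q.2⟩

theorem part1_esssurj (h : (Monad.comparison (adjA hm f)).EssSurj) :
    (Monad.comparison (adjP ((rho₁ X).map f))).EssSurj := by
  constructor
  intro y
  obtain ⟨M, ⟨Θ⟩⟩ := h.mem_essImage (hatAlg hm b₀ hb₀ f y)
  refine ⟨Over.mk ((rho₁ X).map M.hom), ⟨?_⟩⟩
  refine Iso.mk
    ({ f := Over.homMk
        (ConcreteCategory.ofHom (C := Preord) ⟨fun p => aA Θ.hom.f.left ⟨p.1, p.2⟩,
          fun p q hp => by exact aA_mono Θ.hom.f.left hp⟩ :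
            pbPObj ((rho₁ X).map f) (Over.mk ((rho₁ X).map M.hom)) ⟶ y.A.left)
        (by apply ordHom_ext'; intro p; exact overA_w Θ.hom.f ⟨p.1, p.2⟩)
       h := by
        apply overP_ext
        intro q
        exact overA_congr Θ.hom.h ⟨q.1, q.2⟩ })
    ({ f := Over.homMk
        (ConcreteCategory.ofHom (C := Preord) ⟨fun n => aA Θ.inv.f.left n,
          fun n n' hn => by exact aA_mono Θ.inv.f.left hn⟩ :
            y.A.left ⟶ pbPObj ((rho₁ X).map f) (Over.mk ((rho₁ X).map M.hom)))
        (by apply ordHom_ext'; intro n; exact overA_w Θ.inv.f n)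
       h := by
        apply overP_ext
        intro q
        exact overA_congr Θ.inv.h ⟨q.1, q.2⟩ })
    (by
      apply Monad.Algebra.Hom.ext
      apply overP_ext
      intro p
      exact overA_congr (congrArg Monad.Algebra.Hom.f Θ.hom_inv_id) ⟨p.1, p.2⟩)
    (by
      apply Monad.Algebra.Hom.ext
      apply overP_ext
      intro n
      exact overA_congr (congrArg Monad.Algebra.Hom.f Θ.inv_hom_id) n)

end Part1

section Part2

variable {X : Type u} [Preorder X] (hm : LocallyBinaryMeets X)

/-- underlying map to the base, valued in the carrier of `Z` -/
def vh {Z : OrdFam X} (V : Over ((rho₂ X).obj Z)) (j : V.left.idx) : Z.carrier := aF V.hom j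

/-- the initial-order lift of a `Fam`-object over an ordered family -/
def indObj {Z : OrdFam X} (V : Over ((rho₂ X).obj Z)) : OrdFam X where
  carrier := V.left.idx
  str :=
    { le := fun j j' => vh V j ≤ vh V j'
      le_refl := fun j => le_refl _
      le_trans := fun _ _ _ h h' => h.trans h' }
  map := V.left.val

def liftF {Z : OrdFam X} (V : Over ((rho₂ X).obj Z)) : Over Z :=
  Over.mk (Y := indObj V)
    (⟨fun j => vh V j, fun _ _ h => h, fun j => FamHom.le V.hom j⟩ : indObj V ⟶ Z)

def liftFHom {Z : OrdFam X} {V V' : Over ((rho₂ X).obj Z)} (k : V ⟶ V') :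
    liftF V ⟶ liftF V' :=
  Over.homMk
    (⟨aF k.left,
      fun j j' h => by
        show vh V' (aF k.left j) ≤ vh V' (aF k.left j')
        have e1 : vh V' (aF k.left j) = vh V j := overF_w k j
        have e2 : vh V' (aF k.left j') = vh V j' := overF_w k j'
        rw [e1, e2]
        exact h,
      fun j => FamHom.le k.left j⟩ : indObj V ⟶ indObj V')
    (by apply OrdFamHom.ext'; intro v; exact overF_w k v)

variable {A B : OrdFam X} (f : A ⟶ B)

def cFA {V : Over ((rho₂ X).obj B)} (p : pbFCarrier ((rho₂ X).map f) V) :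
    pbACarrier f (liftF (Z := B) V) := ⟨p.1, p.2⟩

def cAF {V : Over ((rho₂ X).obj B)} (p : pbACarrier f (liftF (Z := B) V)) :
    pbFCarrier ((rho₂ X).map f) V := ⟨p.1, p.2⟩

def cTAF {V : Over ((rho₂ X).obj A)}
    (p : pbACarrier f ((Over.map f).obj (liftF (Z := A) V))) :
    pbFCarrier ((rho₂ X).map f) ((Over.map ((rho₂ X).map f)).obj V) := ⟨p.1, p.2⟩

theorem part2_faithful (h : (Monad.comparison (adjA hm f)).Faithful) :
    (Monad.comparison (adjF hm ((rho₂ X).map f))).Faithful := by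
  constructor
  intro V V' k k' e
  have e2 : (Monad.comparison (adjA hm f)).map (liftFHom k) =
      (Monad.comparison (adjA hm f)).map (liftFHom k') := by
    apply Monad.Algebra.Hom.ext
    apply overA_ext
    intro q
    refine pbAext f ?_ ?_
    · exact congrArg (pbF1 ((rho₂ X).map f)) (algF_congr e (cAF f q))
    · rfl
  have e3 := h.map_injective e2
  apply overF_ext
  intro v
  exact overA_congr e3 v

theorem part2_full (h : (Monad.comparison (adjA hm f)).Full) :
    (Monad.comparison (adjF hm ((rho₂ X).map f))).Full := by
  constructor
  intro V V' ψ
  let ψA : (Monad.comparison (adjA hm f)).obj (liftF V) ⟶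
      (Monad.comparison (adjA hm f)).obj (liftF V') :=
    { f := Over.homMk
        (⟨fun q => cFA f (aF ψ.f.left (cAF f q)),
          fun q q' hq => by
            refine pbAle f ?_ ?_
            · show vh V' (pbF1 ((rho₂ X).map f) (aF ψ.f.left (cAF f q))) ≤
                vh V' (pbF1 ((rho₂ X).map f) (aF ψ.f.left (cAF f q')))
              have e1 : vh V' (pbF1 ((rho₂ X).map f) (aF ψ.f.left (cAF f q)))
                  = aF ((rho₂ X).map f) (pbF2 ((rho₂ X).map f) (cAF f q)) :=
                (pbFeq ((rho₂ X).map f) (aF ψ.f.left (cAF f q))).trans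
                  (congrArg (aF ((rho₂ X).map f)) (overF_w ψ.f (cAF f q)))
              have e2 : vh V' (pbF1 ((rho₂ X).map f) (aF ψ.f.left (cAF f q')))
                  = aF ((rho₂ X).map f) (pbF2 ((rho₂ X).map f) (cAF f q')) :=
                (pbFeq ((rho₂ X).map f) (aF ψ.f.left (cAF f q'))).trans
                  (congrArg (aF ((rho₂ X).map f)) (overF_w ψ.f (cAF f q')))
              rw [e1, e2]
              exact aA_mono f (pbAle2 f (p := q) (q := q') hq)
            · show pbA2 f (cFA f (aF ψ.f.left (cAF f q))) ≤
                pbA2 f (cFA f (aF ψ.f.left (cAF f q')))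
              have e3 : pbA2 f (cFA f (aF ψ.f.left (cAF f q))) = pbA2 f q :=
                overF_w ψ.f (cAF f q)
              have e4 : pbA2 f (cFA f (aF ψ.f.left (cAF f q'))) = pbA2 f q' :=
                overF_w ψ.f (cAF f q')
              rw [e3, e4]
              exact pbAle2 f (p := q) (q := q') hq,
          fun q => by exact FamHom.le ψ.f.left (cAF f q)⟩ :
            (pbAObj hm f (liftF V)) ⟶ (pbAObj hm f (liftF V')))
        (by apply OrdFamHom.ext'; intro q; exact overF_w ψ.f (cAF f q))
      h := by
        apply overA_ext
        intro q
        exact overF_congr ψ.h ⟨q.1, q.2⟩ }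
  obtain ⟨khat, hk⟩ := h.map_surjective ψA
  refine ⟨Over.homMk (⟨fun v => aA khat.left v, fun v => OrdFamHom.le khat.left v⟩ :
      V.left ⟶ V'.left) (by apply FamHom.ext'; intro v; exact overA_w khat v), ?_⟩
  apply Monad.Algebra.Hom.ext
  apply overF_ext
  intro p
  exact algA_congr hk (cFA f p)

/-- The initial-order lift of an algebra for the `Fam`-level monad. -/
noncomputable def hatAlgF (y : Monad.Algebra (adjF hm ((rho₂ X).map f)).toMonad) :
    Monad.Algebra (adjA hm f).toMonad where
  A := liftF (Z := A) y.A
  a := Over.homMk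
    (⟨fun q => aF y.a.left (cTAF f q),
      fun q q' hq => by
        show vh y.A (aF y.a.left (cTAF f q)) ≤ vh y.A (aF y.a.left (cTAF f q'))
        have e1 : vh y.A (aF y.a.left (cTAF f q))
            = pbF2 ((rho₂ X).map f) (cTAF f q) := overF_w y.a (cTAF f q)
        have e2 : vh y.A (aF y.a.left (cTAF f q'))
            = pbF2 ((rho₂ X).map f) (cTAF f q') := overF_w y.a (cTAF f q')
        rw [e1, e2]
        exact pbAle2 f (p := q) (q := q') hq,
      fun q => by exact FamHom.le y.a.left (cTAF f q)⟩ :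
        (pbAObj hm f ((Over.map f).obj (liftF y.A))) ⟶ indObj y.A)
    (by apply OrdFamHom.ext'; intro q; exact overF_w y.a (cTAF f q))
  unit := by
    apply overA_ext
    intro n
    exact overF_congr y.unit n
  assoc := by
    apply overA_ext
    intro q
    exact overF_congr y.assoc ⟨q.1, q.2⟩

theorem part2_esssurj (h : (Monad.comparison (adjA hm f)).EssSurj) :
    (Monad.comparison (adjF hm ((rho₂ X).map f))).EssSurj := by
  constructor
  intro y
  obtain ⟨M, ⟨Θ⟩⟩ := h.mem_essImage (hatAlgF hm f y)
  refine ⟨Over.mk ((rho₂ X).map M.hom), ⟨?_⟩⟩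
  refine Iso.mk
    ({ f := Over.homMk
        (⟨fun p => aA Θ.hom.f.left ⟨p.1, p.2⟩,
          fun p => by exact OrdFamHom.le Θ.hom.f.left ⟨p.1, p.2⟩⟩ :
            pbFObj hm ((rho₂ X).map f) (Over.mk ((rho₂ X).map M.hom)) ⟶ y.A.left)
        (by apply FamHom.ext'; intro p; exact overA_w Θ.hom.f ⟨p.1, p.2⟩)
       h := by
        apply overF_ext
        intro q
        exact overA_congr Θ.hom.h ⟨q.1, q.2⟩ })
    ({ f := Over.homMk
        (⟨fun n => aA Θ.inv.f.left n,
          fun n => by exact OrdFamHom.le Θ.inv.f.left n⟩ :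
            y.A.left ⟶ pbFObj hm ((rho₂ X).map f) (Over.mk ((rho₂ X).map M.hom)))
        (by apply FamHom.ext'; intro n; exact overA_w Θ.inv.f n)
       h := by
        apply overF_ext
        intro q
        exact overA_congr Θ.inv.h ⟨q.1, q.2⟩ })
    (by
      apply Monad.Algebra.Hom.ext
      apply overF_ext
      intro p
      exact overA_congr (congrArg Monad.Algebra.Hom.f Θ.hom_inv_id) ⟨p.1, p.2⟩)
    (by
      apply Monad.Algebra.Hom.ext
      apply overF_ext
      intro n
      exact overA_congr (congrArg Monad.Algebra.Hom.f Θ.inv_hom_id) n)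

end Part2

section Surj

variable {X : Type u} [Preorder X] {A B : OrdFam X} (f : A ⟶ B)

instance : Preorder (ULift.{u} Empty) where
  le _ _ := True
  le_refl _ := trivial
  le_trans _ _ _ _ _ := trivial
  lt_iff_le_not_ge a _ := a.down.elim

theorem surj_of_KP_full
    (h : (Monad.comparison (adjP ((rho₁ X).map f))).Full) :
    ∀ b : B.carrier, ∃ a : A.carrier, aA f a = b := by
  intro b
  by_contra hb
  push_neg at hb
  -- the one-point object over b and the empty object
  let Zb : Over ((rho₁ X).obj B) :=
    Over.mk (ConcreteCategory.ofHom (C := Preord) ⟨fun _ : (Preord.of PUnit.{u+1}) => b, fun _ _ _ => le_refl b⟩ :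
      Preord.of PUnit.{u+1} ⟶ (rho₁ X).obj B)
  let O : Over ((rho₁ X).obj B) :=
    Over.mk (ConcreteCategory.ofHom (C := Preord) ⟨fun x : (Preord.of (ULift.{u} Empty)) => (x.down.elim : (rho₁ X).obj B),
      fun x _ _ => x.down.elim⟩ : Preord.of (ULift.{u} Empty) ⟶ (rho₁ X).obj B)
  have contra : ∀ (p : pbPCarrier ((rho₁ X).map f) Zb), False := fun p =>
    hb (pbP2 ((rho₁ X).map f) p) (pbPeq ((rho₁ X).map f) p).symm
  let ψ : (Monad.comparison (adjP ((rho₁ X).map f))).obj Zb ⟶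
      (Monad.comparison (adjP ((rho₁ X).map f))).obj O :=
    { f := Over.homMk
        (ConcreteCategory.ofHom (C := Preord) ⟨fun p => (contra p).elim, fun p _ _ => (contra p).elim⟩ :
          pbPObj ((rho₁ X).map f) Zb ⟶ pbPObj ((rho₁ X).map f) O)
        (by apply ordHom_ext'; intro p; exact (contra p).elim)
      h := by
        apply overP_ext
        intro q
        exact (contra (pbP1 ((rho₁ X).map f) q)).elim }
  obtain ⟨k, -⟩ := h.map_surjective ψ
  exact (aP k.left PUnit.unit : ULift.{u} Empty).down.elim

end Surj

section Part3

variable {X : Type u} [Preorder X] (hm : LocallyBinaryMeets X) {A B : OrdFam X} (f : A ⟶ B)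

/-- conversion: strip an `OrdFam` over-object to a `Preord` over-object pullback element -/
def cMA {M : Over B} (p : pbPCarrier ((rho₁ X).map f) (Over.mk ((rho₁ X).map M.hom))) :
    pbACarrier f M := ⟨p.1, p.2⟩

def cAM {M : Over B} (p : pbACarrier f M) :
    pbPCarrier ((rho₁ X).map f) (Over.mk ((rho₁ X).map M.hom)) := ⟨p.1, p.2⟩

def cMF {M : Over B} (p : pbFCarrier ((rho₂ X).map f) (Over.mk ((rho₂ X).map M.hom))) :
    pbACarrier f M := ⟨p.1, p.2⟩

def cFM {M : Over B} (p : pbACarrier f M) :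
    pbFCarrier ((rho₂ X).map f) (Over.mk ((rho₂ X).map M.hom)) := ⟨p.1, p.2⟩

theorem part3_faithful (hs : ∀ b : B.carrier, ∃ a : A.carrier, aA f a = b) :
    (Monad.comparison (adjA hm f)).Faithful := by
  constructor
  intro M M' k k' e
  apply overA_ext
  intro m
  obtain ⟨a, ha⟩ := hs (aA M.hom m)
  have e1 := algA_congr e (pbAmk f M m a ha.symm)
  exact congrArg (pbA1 f) e1

theorem part3_full (hs : ∀ b : B.carrier, ∃ a : A.carrier, aA f a = b)
    (hP : (Monad.comparison (adjP ((rho₁ X).map f))).Full)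
    (hF : (Monad.comparison (adjF hm ((rho₂ X).map f))).Full) :
    (Monad.comparison (adjA hm f)).Full := by
  constructor
  intro M M' ψ
  -- strip to Preord
  let ψP : (Monad.comparison (adjP ((rho₁ X).map f))).obj (Over.mk ((rho₁ X).map M.hom)) ⟶
      (Monad.comparison (adjP ((rho₁ X).map f))).obj (Over.mk ((rho₁ X).map M'.hom)) :=
    { f := Over.homMk
        (ConcreteCategory.ofHom (C := Preord) ⟨fun p => cAM f (aA ψ.f.left (cMA f p)),
          fun p q hp => by exact aA_mono ψ.f.left hp⟩ :
          pbPObj ((rho₁ X).map f) (Over.mk ((rho₁ X).map M.hom)) ⟶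
            pbPObj ((rho₁ X).map f) (Over.mk ((rho₁ X).map M'.hom)))
        (by apply ordHom_ext'; intro p; exact overA_w ψ.f (cMA f p))
      h := by
        apply overP_ext
        intro q
        exact overA_congr ψ.h ⟨q.1, q.2⟩ }
  -- strip to Fam
  let ψF : (Monad.comparison (adjF hm ((rho₂ X).map f))).obj (Over.mk ((rho₂ X).map M.hom)) ⟶
      (Monad.comparison (adjF hm ((rho₂ X).map f))).obj (Over.mk ((rho₂ X).map M'.hom)) :=
    { f := Over.homMk
        (⟨fun p => cFM f (aA ψ.f.left (cMF f p)),
          fun p => by exact OrdFamHom.le ψ.f.left (cMF f p)⟩ :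
          pbFObj hm ((rho₂ X).map f) (Over.mk ((rho₂ X).map M.hom)) ⟶
            pbFObj hm ((rho₂ X).map f) (Over.mk ((rho₂ X).map M'.hom)))
        (by apply FamHom.ext'; intro p; exact overA_w ψ.f (cMF f p))
      h := by
        apply overF_ext
        intro q
        exact overA_congr ψ.h ⟨q.1, q.2⟩ }
  obtain ⟨k₁, hk₁⟩ := hP.map_surjective ψP
  obtain ⟨k₂, hk₂⟩ := hF.map_surjective ψF
  -- the two underlying functions agree
  have hfun : ∀ m : M.left.carrier, aP k₁.left m = aF k₂.left m := by
    intro m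
    obtain ⟨a, ha⟩ := hs (aA M.hom m)
    have e1 := algP_congr hk₁ (⟨(m, a), ha.symm⟩ :
      pbPCarrier ((rho₁ X).map f) (Over.mk ((rho₁ X).map M.hom)))
    have e2 := algF_congr hk₂ (⟨(m, a), ha.symm⟩ :
      pbFCarrier ((rho₂ X).map f) (Over.mk ((rho₂ X).map M.hom)))
    have e1' := congrArg (pbP1 ((rho₁ X).map f)) e1
    have e2' := congrArg (pbF1 ((rho₂ X).map f)) e2
    exact e1'.trans e2'.symm
  refine ⟨Over.homMk
    (⟨fun m => aP k₁.left m, aP_mono k₁.left,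
      fun m => by
        have e := hfun m
        show M.left.map m ≤ M'.left.map (aP k₁.left m)
        rw [e]
        exact FamHom.le k₂.left m⟩ : M.left ⟶ M'.left)
    (by apply OrdFamHom.ext'; intro m; exact overP_w k₁ m), ?_⟩
  apply Monad.Algebra.Hom.ext
  apply overA_ext
  intro q
  refine pbAext f ?_ ?_
  · exact congrArg (pbP1 ((rho₁ X).map f)) (algP_congr hk₁ ⟨q.1, q.2⟩)
  · exact (overA_w ψ.f q).symm

end Part3

section Part3E

variable {X : Type u} [Preorder X] (hm : LocallyBinaryMeets X) {A B : OrdFam X} (f : A ⟶ B)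

theorem part3_esssurj (hs : ∀ b : B.carrier, ∃ a : A.carrier, aA f a = b)
    (hPe : (Monad.comparison (adjP ((rho₁ X).map f))).EssSurj)
    (hFe : (Monad.comparison (adjF hm ((rho₂ X).map f))).EssSurj) :
    (Monad.comparison (adjA hm f)).EssSurj := by
  constructor
  intro y
  choose s hs' using hs
  -- the stripped Preord algebra
  let yP : Monad.Algebra (adjP ((rho₁ X).map f)).toMonad :=
    { A := Over.mk ((rho₁ X).map y.A.hom)
      a := Over.homMk
        (ConcreteCategory.ofHom (C := Preord) ⟨fun p => aA y.a.left ⟨p.1, p.2⟩, fun p q hp => by exact aA_mono y.a.left hp⟩ :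
          pbPObj ((rho₁ X).map f) ((Over.map ((rho₁ X).map f)).obj (Over.mk ((rho₁ X).map y.A.hom)))
            ⟶ (rho₁ X).obj y.A.left)
        (by apply ordHom_ext'; intro p; exact overA_w y.a ⟨p.1, p.2⟩)
      unit := by apply overP_ext; intro n; exact overA_congr y.unit n
      assoc := by apply overP_ext; intro q; exact overA_congr y.assoc ⟨q.1, q.2⟩ }
  -- the stripped Fam algebra
  let yF : Monad.Algebra (adjF hm ((rho₂ X).map f)).toMonad :=
    { A := Over.mk ((rho₂ X).map y.A.hom)
      a := Over.homMk
        (⟨fun p => aA y.a.left ⟨p.1, p.2⟩, fun p => by exact OrdFamHom.le y.a.left ⟨p.1, p.2⟩⟩ :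
          pbFObj hm ((rho₂ X).map f)
              ((Over.map ((rho₂ X).map f)).obj (Over.mk ((rho₂ X).map y.A.hom)))
            ⟶ (rho₂ X).obj y.A.left)
        (by apply FamHom.ext'; intro p; exact overA_w y.a ⟨p.1, p.2⟩)
      unit := by apply overF_ext; intro n; exact overA_congr y.unit n
      assoc := by apply overF_ext; intro q; exact overA_congr y.assoc ⟨q.1, q.2⟩ }
  obtain ⟨M₁, ⟨Θ₁⟩⟩ := hPe.mem_essImage yP
  obtain ⟨M₂, ⟨Θ₂⟩⟩ := hFe.mem_essImage yF
  -- identities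
  have h11 : ∀ p, aP Θ₁.inv.f.left (aP Θ₁.hom.f.left p) = p :=
    fun p => overP_congr (congrArg Monad.Algebra.Hom.f Θ₁.hom_inv_id) p
  have h12 : ∀ n, aP Θ₁.hom.f.left (aP Θ₁.inv.f.left n) = n :=
    fun n => overP_congr (congrArg Monad.Algebra.Hom.f Θ₁.inv_hom_id) n
  have h21 : ∀ r, aF Θ₂.inv.f.left (aF Θ₂.hom.f.left r) = r :=
    fun r => overF_congr (congrArg Monad.Algebra.Hom.f Θ₂.hom_inv_id) r
  have h22 : ∀ n, aF Θ₂.hom.f.left (aF Θ₂.inv.f.left n) = n :=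
    fun n => overF_congr (congrArg Monad.Algebra.Hom.f Θ₂.inv_hom_id) n
  have w1 : ∀ p, aA y.A.hom (aP Θ₁.hom.f.left p) = pbP2 ((rho₁ X).map f) p :=
    fun p => overP_w Θ₁.hom.f p
  have w2 : ∀ r, aA y.A.hom (aF Θ₂.hom.f.left r) = pbF2 ((rho₂ X).map f) r :=
    fun r => overF_w Θ₂.hom.f r
  have w2' : ∀ n, pbF2 ((rho₂ X).map f) (aF Θ₂.inv.f.left n) = aA y.A.hom n :=
    fun n => overF_w Θ₂.inv.f n
  -- the canonical element over m
  let pq : M₁.left.carrier → pbPCarrier ((rho₁ X).map f) M₁ :=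
    fun m => ⟨(m, s (aP M₁.hom m)), (hs' _).symm⟩
  let σ : M₁.left.carrier → M₂.left.idx :=
    fun m => pbF1 ((rho₂ X).map f) (aF Θ₂.inv.f.left (aP Θ₁.hom.f.left (pq m)))
  have iσa : ∀ m, pbF2 ((rho₂ X).map f) (aF Θ₂.inv.f.left (aP Θ₁.hom.f.left (pq m)))
      = s (aP M₁.hom m) :=
    fun m => (w2' _).trans (w1 (pq m))
  have hi : ∀ m, aF M₂.hom (σ m) = aP M₁.hom m := by
    intro m
    exact (pbFeq ((rho₂ X).map f) _).trans ((congrArg (aA f) (iσa m)).trans (hs' _))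
  -- the key compatibility
  have key : ∀ (m : M₁.left.carrier) (a : A.carrier) (ha : aP M₁.hom m = aA f a)
      (c2 : aF M₂.hom (σ m) = aF ((rho₂ X).map f) a),
      aF Θ₂.hom.f.left ⟨(σ m, a), c2⟩ = aP Θ₁.hom.f.left ⟨(m, a), ha⟩ := by
    intro m a ha c2
    have ha₀ : aA f (s (aP M₁.hom m)) = aP M₁.hom m := hs' _
    have c0 : aF M₂.hom (σ m) = aF ((rho₂ X).map f) (s (aP M₁.hom m)) :=
      (hi m).trans ha₀.symm
    have st1 : aF Θ₂.inv.f.left (aP Θ₁.hom.f.left (pq m)) = ⟨(σ m, s (aP M₁.hom m)), c0⟩ :=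
      pbFext ((rho₂ X).map f) rfl (iσa m)
    have st2 : aF Θ₂.hom.f.left ⟨(σ m, s (aP M₁.hom m)), c0⟩ = aP Θ₁.hom.f.left (pq m) :=
      (congrArg (aF Θ₂.hom.f.left) st1).symm.trans (h22 _)
    have eq2 := overF_congr Θ₂.hom.h
      (⟨(⟨(σ m, s (aP M₁.hom m)), c0⟩, a), ha₀.trans ha⟩ :
        pbFCarrier ((rho₂ X).map f)
          ((Over.map ((rho₂ X).map f)).obj ((pbF hm ((rho₂ X).map f)).obj M₂)))
    have eq1 := overP_congr Θ₁.hom.h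
      (⟨(pq m, a), ha₀.trans ha⟩ :
        pbPCarrier ((rho₁ X).map f)
          ((Over.map ((rho₁ X).map f)).obj ((pbP ((rho₁ X).map f)).obj M₁)))
    have ch1 : aA (y.A.hom ≫ f) (aF Θ₂.hom.f.left ⟨(σ m, s (aP M₁.hom m)), c0⟩) = aA f a :=
      (congrArg (aA f) (w2 _)).trans (ha₀.trans ha)
    have ch2 : aA (y.A.hom ≫ f) (aP Θ₁.hom.f.left (pq m)) = aA f a :=
      (congrArg (aA f) (w1 (pq m))).trans (ha₀.trans ha)
    have harg : (⟨(aF Θ₂.hom.f.left ⟨(σ m, s (aP M₁.hom m)), c0⟩, a), ch1⟩ :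
        pbACarrier f ((Over.map f).obj y.A)) = ⟨(aP Θ₁.hom.f.left (pq m), a), ch2⟩ :=
      pbAext f st2 rfl
    exact eq2.symm.trans ((congrArg (aA y.a.left) harg).trans eq1)
  -- the candidate object over B
  let MoL : OrdFam X := { carrier := M₁.left.carrier, map := fun m => M₂.left.val (σ m) }
  let Mo : Over B := Over.mk (Y := MoL)
    (⟨aP M₁.hom, aP_mono M₁.hom, fun m => by
        exact le_of_le_of_eq (FamHom.le M₂.hom (σ m)) (congrArg B.map (hi m))⟩ : MoL ⟶ B)
  refine ⟨Mo, ⟨?_⟩⟩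
  refine Iso.mk
    ({ f := Over.homMk
        (⟨fun q => aP Θ₁.hom.f.left ⟨q.1, q.2⟩,
          fun q q' hq => by exact aP_mono Θ₁.hom.f.left hq,
          fun q => by
            have e := key (pbA1 f q) (pbA2 f q) (pbAeq f q)
              ((hi (pbA1 f q)).trans (pbAeq f q))
            have l := FamHom.le Θ₂.hom.f.left
              (⟨(σ (pbA1 f q), pbA2 f q), (hi (pbA1 f q)).trans (pbAeq f q)⟩ :
                pbFCarrier ((rho₂ X).map f) M₂)
            exact le_of_le_of_eq l (congrArg y.A.left.map e)⟩ :
          pbAObj hm f Mo ⟶ y.A.left)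
        (by apply OrdFamHom.ext'; intro q; exact overP_w Θ₁.hom.f ⟨q.1, q.2⟩)
       h := by
        apply overA_ext
        intro r
        exact overP_congr Θ₁.hom.h ⟨r.1, r.2⟩ })
    ({ f := Over.homMk
        (⟨fun n => (⟨(aP Θ₁.inv.f.left n).1, (aP Θ₁.inv.f.left n).2⟩ : pbACarrier f Mo),
          fun n n' hn => by exact aP_mono Θ₁.inv.f.left hn,
          fun n => by
            have l := FamHom.le Θ₂.inv.f.left n
            have e5 : aF Θ₂.inv.f.left n =
                ⟨(σ (pbP1 ((rho₁ X).map f) (aP Θ₁.inv.f.left n)),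
                  pbP2 ((rho₁ X).map f) (aP Θ₁.inv.f.left n)),
                  (hi _).trans (pbPeq ((rho₁ X).map f) (aP Θ₁.inv.f.left n))⟩ := by
              have hinj : ∀ r r', aF Θ₂.hom.f.left r = aF Θ₂.hom.f.left r' → r = r' :=
                fun r r' hrr => (h21 r).symm.trans ((congrArg (aF Θ₂.inv.f.left) hrr).trans (h21 r'))
              apply hinj
              rw [h22 n]
              exact (key (pbP1 ((rho₁ X).map f) (aP Θ₁.inv.f.left n))
                (pbP2 ((rho₁ X).map f) (aP Θ₁.inv.f.left n))
                (pbPeq ((rho₁ X).map f) (aP Θ₁.inv.f.left n))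
                ((hi _).trans (pbPeq ((rho₁ X).map f) (aP Θ₁.inv.f.left n)))).trans (h12 n) |>.symm
            exact le_of_le_of_eq l
              (congrArg (pbFObj hm ((rho₂ X).map f) M₂).val e5)⟩ :
          y.A.left ⟶ pbAObj hm f Mo)
        (by apply OrdFamHom.ext'; intro n; exact overP_w Θ₁.inv.f n)
       h := by
        apply overA_ext
        intro r
        exact overP_congr Θ₁.inv.h ⟨r.1, r.2⟩ })
    (by
      apply Monad.Algebra.Hom.ext
      apply overA_ext
      intro q
      exact overP_congr (congrArg Monad.Algebra.Hom.f Θ₁.hom_inv_id) ⟨q.1, q.2⟩)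
    (by
      apply Monad.Algebra.Hom.ext
      apply overA_ext
      intro n
      exact overP_congr (congrArg Monad.Algebra.Hom.f Θ₁.inv_hom_id) n)

end Part3E

theorem statement12' {X : Type u} [Preorder X] (hX : LocallyComplete X)
    (hbot : ∃ b : X, ∀ x : X, b ≤ x)
    {A B : OrdFam X} (f : A ⟶ B) :
    @IsEffectiveDescentMorphism (OrdFam X) _ (OrdFam.hasPullbacks hX.meets) _ _ f ↔
      (IsEffectiveDescentMorphism ((rho₁ X).map f) ∧
        @IsEffectiveDescentMorphism (FamCat X) _ (FamCat.hasPullbacks hX.meets) _ _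
          ((rho₂ X).map f)) := by
  obtain ⟨b₀, hb₀⟩ := hbot
  have hm : LocallyBinaryMeets X := hX.meets
  constructor
  · intro hf
    have hA : (Monad.comparison (adjA hm f)).IsEquivalence :=
      comparison_isEquivalence_congr
        (@Over.mapPullbackAdj (OrdFam X) _ _ _ f (by haveI := OrdFam.hasPullbacks hX.meets; infer_instance))
        (adjA hm f) hf
    constructor
    · have h1 : (Monad.comparison (adjP ((rho₁ X).map f))).IsEquivalence :=
        { faithful := part1_faithful hm b₀ hb₀ f hA.faithful
          full := part1_full hm b₀ hb₀ f hA.full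
          essSurj := part1_esssurj hm b₀ hb₀ f hA.essSurj }
      exact comparison_isEquivalence_congr (adjP ((rho₁ X).map f))
        (Over.mapPullbackAdj ((rho₁ X).map f)) h1
    · have h2 : (Monad.comparison (adjF hm ((rho₂ X).map f))).IsEquivalence :=
        { faithful := part2_faithful hm f hA.faithful
          full := part2_full hm f hA.full
          essSurj := part2_esssurj hm f hA.essSurj }
      exact comparison_isEquivalence_congr (adjF hm ((rho₂ X).map f))
        (@Over.mapPullbackAdj (FamCat X) _ _ _
          ((rho₂ X).map f) (by haveI := FamCat.hasPullbacks hX.meets; infer_instance)) h2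
  · rintro ⟨h1, h2⟩
    have hP : (Monad.comparison (adjP ((rho₁ X).map f))).IsEquivalence :=
      comparison_isEquivalence_congr (Over.mapPullbackAdj ((rho₁ X).map f))
        (adjP ((rho₁ X).map f)) h1
    have hF : (Monad.comparison (adjF hm ((rho₂ X).map f))).IsEquivalence :=
      comparison_isEquivalence_congr
        (@Over.mapPullbackAdj (FamCat X) _ _ _
          ((rho₂ X).map f) (by haveI := FamCat.hasPullbacks hX.meets; infer_instance)) (adjF hm ((rho₂ X).map f)) h2
    have hs := surj_of_KP_full f hP.full
    have hA : (Monad.comparison (adjA hm f)).IsEquivalence :=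
      { faithful := part3_faithful hm f hs
        full := part3_full hm f hs hP.full hF.full
        essSurj := part3_esssurj hm f hs hP.essSurj hF.essSurj }
    exact comparison_isEquivalence_congr (adjA hm f)
      (@Over.mapPullbackAdj (OrdFam X) _ _ _ f (by haveI := OrdFam.hasPullbacks hX.meets; infer_instance)) hA


/-- **Lemma.** For `X` locally complete with a bottom element, a morphism `f` in the category
`Ord ×_Set Fam(X)` is an effective descent morphism iff `ρ₁(f)` is an effective descent
morphism in `Ord` and `ρ₂(f)` is an effective descent morphism in `Fam(X)`. -/
theorem statement12 {X : Type u} [Preorder X] (hX : LocallyComplete X)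
    (hbot : ∃ b : X, ∀ x : X, b ≤ x)
    {A B : OrdFam X} (f : A ⟶ B) :
    @IsEffectiveDescentMorphism (OrdFam X) _ (OrdFam.hasPullbacks hX.meets) _ _ f ↔
      (IsEffectiveDescentMorphism ((rho₁ X).map f) ∧
        @IsEffectiveDescentMorphism (FamCat X) _ (FamCat.hasPullbacks hX.meets) _ _
          ((rho₂ X).map f)) := by
  exact statement12' hX hbot f

end Desc
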